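/- Fix integers n ≥ 1 and N ≥ n+2. For every f ∈ LC_c(ℝⁿ) and every hyperplane H ∈ Gr(n,n−1), the maximum of J(p) over log affine minorants p ∈ 𝒫_N(f) is at least the maximum of J(q) over log affine minorants q ∈ 𝒫_N(S_H f), where S_H f is the Steiner symmetral of f with respect to H. -/

import Mathlib

open MeasureTheory Filter Set Metric

noncomputable section

/-- `n`-dimensional Euclidean space `ℝⁿ`. -/
abbrev Eucl (n : ℕ) : Type := EuclideanSpace ℝ (Fin n)

/-- The epigraph `epi(ψ) = {(x,t) : t ≥ ψ(x)}` of an extended-real-valued function. -/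
def epi {n : ℕ} (ψ : Eucl n → EReal) : Set (Eucl n × ℝ) :=
  {q : Eucl n × ℝ | ψ q.1 ≤ (q.2 : EReal)}

/-- `expNeg t = exp (−t)`, extended so that `exp (−(+∞)) = 0`
(the value at `⊥` is irrelevant: functions in `ℝ ∪ {+∞}` never take the value `⊥`). -/
def expNeg (t : EReal) : ℝ :=
  if t = ⊤ ∨ t = ⊥ then 0 else Real.exp (-t.toReal)

/-- `negLog y = − log y` for `y > 0`, and `+∞` otherwise; for `f = exp(−ψ) ≥ 0`
this recovers `ψ` from `f`. -/
def negLog (y : ℝ) : EReal :=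
  if y ≤ 0 then ⊤ else ((-Real.log y : ℝ) : EReal)

/-- Membership in the class `LC_c(ℝⁿ)`: `f = exp(−ψ)` for a convex (as a function into
`ℝ ∪ {+∞}`, encoded by convexity of the epigraph) lower semicontinuous coercive function `ψ`,
`ψ ≢ +∞`, the origin lies in `dom ψ`, and `dom ψ` is not contained in a hyperplane
(its affine span is everything). -/
def MemLCc {n : ℕ} (f : Eucl n → ℝ) : Prop :=
  ∃ ψ : Eucl n → EReal,
    (∀ x, ψ x ≠ ⊥) ∧
    Convex ℝ (epi ψ) ∧
    LowerSemicontinuous ψ ∧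
    Tendsto ψ (cocompact (Eucl n)) (nhds ⊤) ∧
    (∃ x, ψ x ≠ ⊤) ∧
    ψ 0 ≠ ⊤ ∧
    affineSpan ℝ {x : Eucl n | ψ x ≠ ⊤} = ⊤ ∧
    (∀ x, f x = expNeg (ψ x))

/-- The union of the vertical (upward) rays `{(xᵢ,t) : t ≥ tᵢ}`. -/
def verticalRays {n k : ℕ} (x : Fin k → Eucl n) (t : Fin k → ℝ) : Set (Eucl n × ℝ) :=
  ⋃ i, {q : Eucl n × ℝ | q.1 = x i ∧ t i ≤ q.2}

/-- `p` is the inner linearization of `ψ` built from `k` points `(xᵢ,tᵢ)` of `epi ψ`: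
its epigraph is the convex hull of the union of the vertical rays with those endpoints
(so `p = +∞` outside `conv{x₁,…,x_k}`). -/
def IsInnerLinearization {n : ℕ} (ψ : Eucl n → EReal) (k : ℕ) (p : Eucl n → EReal) : Prop :=
  ∃ (x : Fin k → Eucl n) (t : Fin k → ℝ),
    (∀ i, ψ (x i) ≤ ((t i : ℝ) : EReal)) ∧
    epi p = convexHull ℝ (verticalRays x t)

/-- `𝒫_N(f)`: the set of log affine minorants `exp(−p)` of `f = exp(−ψ)` built from
`k ≤ N` points of `epi ψ` (at most `N` break points). -/
def PN {n : ℕ} (N : ℕ) (f : Eucl n → ℝ) : Set (Eucl n → ℝ) :=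
  {q : Eucl n → ℝ | ∃ k : ℕ, 1 ≤ k ∧ k ≤ N ∧ ∃ p : Eucl n → EReal,
    IsInnerLinearization (fun x => negLog (f x)) k p ∧ ∀ x, q x = expNeg (p x)}

/-- The total mass `J(f) = ∫ f`. -/
def totalMass {n : ℕ} (f : Eucl n → ℝ) : ℝ := ∫ x, f x

/-- `G_{n,N}(f) = min_{p ∈ 𝒫_N(f)} (J(f) − J(p))`. -/
def Gfun {n : ℕ} (N : ℕ) (f : Eucl n → ℝ) : ℝ :=
  sInf {d : ℝ | ∃ q ∈ PN N f, d = totalMass f - totalMass q}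

/-- `g` is the symmetric decreasing rearrangement of `f`: for every `t > 0` the superlevel set
`{g ≥ t}` is the closed Euclidean ball centered at the origin (possibly degenerate or empty)
with the same Lebesgue measure as `{f ≥ t}`. -/
def IsSDR {n : ℕ} (f g : Eucl n → ℝ) : Prop :=
  ∀ t : ℝ, 0 < t →
    ({x : Eucl n | t ≤ g x} = ∅ ∨
      ∃ r : ℝ, 0 ≤ r ∧ {x : Eucl n | t ≤ g x} = closedBall (0 : Eucl n) r) ∧
    volume {x : Eucl n | t ≤ g x} = volume {x : Eucl n | t ≤ f x}

/-- The (strict, upper) hypograph `{(x,s) : 0 < s ≤ f(x)}` of a nonnegative function; this is the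
region between the graph of `f` and the hyperplane `ℝⁿ × {0}`, used for Steiner symmetrization. -/
def hyp {n : ℕ} (f : Eucl n → ℝ) : Set (Eucl n × ℝ) :=
  {q : Eucl n × ℝ | 0 < q.2 ∧ q.2 ≤ f q.1}

/-- The chord parameters: `lineSet u A h = {t : h + t·ũ ∈ A}`, where `ũ = (u,0)`. -/
def lineSet {n : ℕ} (u : Eucl n) (A : Set (Eucl n × ℝ)) (h : Eucl n × ℝ) : Set ℝ :=
  {t : ℝ | (h.1 + t • u, h.2) ∈ A}

/-- The orthogonal projection of `A ⊆ ℝⁿ × ℝ` onto the hyperplane `H̃ = u^⊥ × ℝ`. -/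
def projSet {n : ℕ} (u : Eucl n) (A : Set (Eucl n × ℝ)) : Set (Eucl n × ℝ) :=
  {h : Eucl n × ℝ | (inner ℝ h.1 u : ℝ) = 0 ∧ (lineSet u A h).Nonempty}

/-- The Steiner symmetral of a set `A ⊆ ℝⁿ × ℝ` with respect to the hyperplane `u^⊥ × ℝ`:
`S_H A = {h + t·ũ : h ∈ proj_H A, |t| ≤ (A⁺(h) − A⁻(h))/2}`. -/
def steinerSet {n : ℕ} (u : Eucl n) (A : Set (Eucl n × ℝ)) : Set (Eucl n × ℝ) :=
  {q : Eucl n × ℝ | ∃ h ∈ projSet u A, ∃ t : ℝ,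
    |t| ≤ (sSup (lineSet u A h) - sInf (lineSet u A h)) / 2 ∧ q = (h.1 + t • u, h.2)}

/-- `g = S_H f` is the Steiner symmetral of `f` with respect to the hyperplane `H = u^⊥`:
the hypograph of `g` is the Steiner symmetral of the hypograph of `f` w.r.t. `H̃ = H × ℝ`. -/
def IsSteinerSymmetral {n : ℕ} (u : Eucl n) (f g : Eucl n → ℝ) : Prop :=
  hyp g = steinerSet u (hyp f)

namespace SteinerAux

lemma expNeg_nonneg (t : EReal) : 0 ≤ expNeg t := by
  unfold expNeg; split
  · exact le_rfl
  · exact (Real.exp_pos _).le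

lemma expNeg_coe (a : ℝ) : expNeg (a : EReal) = Real.exp (-a) := by
  simp [expNeg, EReal.toReal_coe]

lemma expNeg_top : expNeg ⊤ = 0 := by simp [expNeg]

lemma expNeg_pos {a : ℝ} : 0 < expNeg (a : EReal) := by
  rw [expNeg_coe]; exact Real.exp_pos _

lemma negLog_expNeg (a : EReal) (ha : a ≠ ⊥) : negLog (expNeg a) = a := by
  induction a with
  | bot => exact absurd rfl ha
  | coe a => rw [expNeg_coe, negLog, if_neg (not_le.2 (Real.exp_pos _))]
             simp [Real.log_exp]
  | top => rw [expNeg_top, negLog, if_pos le_rfl]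

lemma expNeg_le_expNeg {a b : EReal} (ha : a ≠ ⊥) (hab : a ≤ b) : expNeg b ≤ expNeg a := by
  induction a with
  | bot => exact absurd rfl ha
  | coe a =>
    induction b with
    | bot => simp at hab
    | coe b =>
      rw [expNeg_coe, expNeg_coe]
      exact Real.exp_le_exp.2 (neg_le_neg (EReal.coe_le_coe_iff.1 hab))
    | top => rw [expNeg_top]; exact expNeg_nonneg _
  | top =>
    have : b = ⊤ := top_le_iff.1 hab
    rw [this]

lemma le_expNeg_iff {a : EReal} (ha : a ≠ ⊥) {s : ℝ} (hs : 0 < s) :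
    s ≤ expNeg a ↔ a ≤ ((-Real.log s : ℝ) : EReal) := by
  induction a with
  | bot => exact absurd rfl ha
  | coe a =>
    rw [expNeg_coe, EReal.coe_le_coe_iff]
    constructor
    · intro h
      have := Real.log_le_log hs h
      rw [Real.log_exp] at this
      linarith
    · intro h
      have : Real.exp (Real.log s) ≤ Real.exp (-a) := Real.exp_le_exp.2 (by linarith)
      rwa [Real.exp_log hs] at this
  | top =>
    simp only [expNeg_top]
    constructor
    · intro h; linarith
    · intro h; exact absurd h (by simp)

lemma eq_of_forall_real_le_iff {a b : EReal} (ha : a ≠ ⊥) (hb : b ≠ ⊥)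
    (h : ∀ s : ℝ, a ≤ (s : EReal) ↔ b ≤ (s : EReal)) : a = b := by
  refine le_antisymm ?_ ?_
  · induction b with
    | bot => exact absurd rfl hb
    | coe b => exact (h b).2 le_rfl
    | top => exact le_top
  · induction a with
    | bot => exact absurd rfl ha
    | coe a => exact (h a).1 le_rfl
    | top => exact le_top


variable {n k : ℕ}

/-- Combinations of the generators producing `z`. -/
def comboSet (x : Fin k → Eucl n) (z : Eucl n) : Set (Fin k → ℝ) :=
  {l | l ∈ stdSimplex ℝ (Fin k) ∧ ∑ i, l i • x i = z}

/-- The convex-combination description of the hull of vertical rays. -/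
def lamSet (x : Fin k → Eucl n) (t : Fin k → ℝ) : Set (Eucl n × ℝ) :=
  {q | ∃ l ∈ stdSimplex ℝ (Fin k), ∑ i, l i • x i = q.1 ∧ ∑ i, l i * t i ≤ q.2}

lemma convex_lamSet (x : Fin k → Eucl n) (t : Fin k → ℝ) : Convex ℝ (lamSet x t) := by
  rintro p ⟨l1, hl1, hx1, ht1⟩ q ⟨l2, hl2, hx2, ht2⟩ a b ha hb hab
  refine ⟨fun i => a * l1 i + b * l2 i, ?_, ?_, ?_⟩
  · exact convex_stdSimplex ℝ (Fin k) hl1 hl2 ha hb hab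
  · have : ∑ i, (a * l1 i + b * l2 i) • x i
        = a • ∑ i, l1 i • x i + b • ∑ i, l2 i • x i := by
      rw [Finset.smul_sum, Finset.smul_sum, ← Finset.sum_add_distrib]
      refine Finset.sum_congr rfl fun i _ => ?_
      rw [add_smul, smul_smul, smul_smul]
    rw [this, hx1, hx2]; rfl
  · have : ∑ i, (a * l1 i + b * l2 i) * t i
        = a * ∑ i, l1 i * t i + b * ∑ i, l2 i * t i := by
      rw [Finset.mul_sum, Finset.mul_sum, ← Finset.sum_add_distrib]
      refine Finset.sum_congr rfl fun i _ => ?_; ring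
    rw [this]
    exact add_le_add (mul_le_mul_of_nonneg_left ht1 ha) (mul_le_mul_of_nonneg_left ht2 hb)

lemma single_mem_stdSimplex (i : Fin k) :
    (fun j => if j = i then (1:ℝ) else 0) ∈ stdSimplex ℝ (Fin k) := by
  constructor
  · intro j; dsimp only; split <;> norm_num
  · simp

lemma sum_single_smul {M : Type*} [AddCommMonoid M] [Module ℝ M] (i : Fin k) (v : Fin k → M) :
    ∑ j, (if j = i then (1:ℝ) else 0) • v j = v i := by
  rw [Finset.sum_eq_single i]
  · simp
  · intro b _ hb; simp [hb]
  · intro h; exact absurd (Finset.mem_univ i) h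

lemma sum_single_mul (i : Fin k) (v : Fin k → ℝ) :
    ∑ j, (if j = i then (1:ℝ) else 0) * v j = v i := by
  simpa using sum_single_smul i v

lemma verticalRays_subset_lamSet (x : Fin k → Eucl n) (t : Fin k → ℝ) :
    verticalRays x t ⊆ lamSet x t := by
  rintro q hq
  obtain ⟨i, hq1, hq2⟩ := by simpa [verticalRays] using hq
  exact ⟨fun j => if j = i then (1:ℝ) else 0, single_mem_stdSimplex i,
    by rw [sum_single_smul]; exact hq1.symm,
    by rw [sum_single_mul]; exact hq2⟩

lemma lamSet_subset_hull (x : Fin k → Eucl n) (t : Fin k → ℝ) :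
    lamSet x t ⊆ convexHull ℝ (verticalRays x t) := by
  rintro ⟨z, s⟩ ⟨l, hl, hx, ht⟩
  have hmem : ∀ i ∈ Finset.univ, (x i, t i + (s - ∑ j, l j * t j)) ∈ verticalRays x t := by
    intro i _
    exact Set.mem_iUnion.2 ⟨i, rfl, by dsimp; linarith [ht]⟩
  have := Finset.centerMass_mem_convexHull (Finset.univ)
    (fun i _ => hl.1 i) (by rw [hl.2]; norm_num)
    (fun i hi => hmem i hi)
  have hcm : Finset.univ.centerMass l (fun i => (x i, t i + (s - ∑ j, l j * t j)))
      = (z, s) := by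
    rw [Finset.centerMass, hl.2, inv_one, one_smul]
    rw [Prod.ext_iff]
    constructor
    · rw [Prod.fst_sum]
      simpa using hx
    · rw [Prod.snd_sum]
      simp only [Prod.smul_snd]
      have h2 : ∑ i, (l i • (t i + (s - ∑ j, l j * t j)))
          = ∑ i, l i * t i + (∑ i, l i) * (s - ∑ j, l j * t j) := by
        simp only [smul_eq_mul, Finset.sum_mul, ← Finset.sum_add_distrib]
        refine Finset.sum_congr rfl fun i _ => ?_
        ring
      rw [h2, hl.2, one_mul]
      ring
  rwa [hcm] at this

lemma hull_verticalRays_eq (x : Fin k → Eucl n) (t : Fin k → ℝ) :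
    convexHull ℝ (verticalRays x t) = lamSet x t :=
  le_antisymm (convexHull_min (verticalRays_subset_lamSet x t) (convex_lamSet x t))
    (lamSet_subset_hull x t)

/-- The inner linearization function determined by generators `(x i, t i)`. -/
def pval (x : Fin k → Eucl n) (t : Fin k → ℝ) (z : Eucl n) : EReal :=
  sInf ((fun l => ((∑ i, l i * t i : ℝ) : EReal)) '' comboSet x z)

lemma isCompact_comboSet (x : Fin k → Eucl n) (z : Eucl n) : IsCompact (comboSet x z) := by
  have : comboSet x z = stdSimplex ℝ (Fin k) ∩ {l | ∑ i, l i • x i = z} := rfl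
  rw [this]
  refine (isCompact_stdSimplex _ _).inter_right ?_
  exact isClosed_eq (by continuity) continuous_const

lemma continuous_wsum (t : Fin k → ℝ) : Continuous (fun l : Fin k → ℝ => ∑ i, l i * t i) := by
  continuity

/-- `pval` is attained as a minimum when `comboSet` is nonempty. -/
lemma pval_eq_min {x : Fin k → Eucl n} {t : Fin k → ℝ} {z : Eucl n}
    (hne : (comboSet x z).Nonempty) :
    ∃ l₀ ∈ comboSet x z, pval x t z = ((∑ i, l₀ i * t i : ℝ) : EReal) ∧
      ∀ l ∈ comboSet x z, ∑ i, l₀ i * t i ≤ ∑ i, l i * t i := by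
  obtain ⟨l₀, hl₀, hmin⟩ := (isCompact_comboSet x z).exists_isMinOn hne
    ((continuous_wsum t).continuousOn)
  refine ⟨l₀, hl₀, ?_, fun l hl => hmin hl⟩
  refine le_antisymm (sInf_le ⟨l₀, hl₀, rfl⟩) ?_
  refine le_sInf ?_
  rintro b ⟨l, hl, rfl⟩
  exact EReal.coe_le_coe_iff.2 (hmin hl)

lemma pval_eq_top {x : Fin k → Eucl n} {t : Fin k → ℝ} {z : Eucl n}
    (hne : ¬ (comboSet x z).Nonempty) : pval x t z = ⊤ := by
  rw [pval, Set.not_nonempty_iff_eq_empty.1 hne]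
  simp

lemma pval_ne_bot (x : Fin k → Eucl n) (t : Fin k → ℝ) (z : Eucl n) : pval x t z ≠ ⊥ := by
  by_cases hne : (comboSet x z).Nonempty
  · obtain ⟨l₀, _, h, _⟩ := pval_eq_min (t := t) hne
    rw [h]; exact EReal.coe_ne_bot _
  · rw [pval_eq_top hne]; simp

lemma pval_le_iff {x : Fin k → Eucl n} {t : Fin k → ℝ} {z : Eucl n} {s : ℝ} :
    pval x t z ≤ (s : EReal) ↔ ∃ l ∈ comboSet x z, ∑ i, l i * t i ≤ s := by
  constructor
  · intro h
    by_cases hne : (comboSet x z).Nonempty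
    · obtain ⟨l₀, hl₀, heq, _⟩ := pval_eq_min (t := t) hne
      rw [heq] at h
      exact ⟨l₀, hl₀, EReal.coe_le_coe_iff.1 h⟩
    · rw [pval_eq_top hne] at h
      exact absurd h (by simp)
  · rintro ⟨l, hl, hle⟩
    exact le_trans (sInf_le ⟨l, hl, rfl⟩) (EReal.coe_le_coe_iff.2 hle)

lemma epi_pval (x : Fin k → Eucl n) (t : Fin k → ℝ) :
    epi (pval x t) = lamSet x t := by
  ext ⟨z, s⟩
  simp only [epi, Set.mem_setOf_eq, lamSet]
  rw [pval_le_iff]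
  constructor
  · rintro ⟨l, ⟨hl, hx⟩, hle⟩; exact ⟨l, hl, hx, hle⟩
  · rintro ⟨l, hl, hx, hle⟩; exact ⟨l, ⟨hl, hx⟩, hle⟩

lemma epi_pval_hull (x : Fin k → Eucl n) (t : Fin k → ℝ) :
    epi (pval x t) = convexHull ℝ (verticalRays x t) := by
  rw [epi_pval, hull_verticalRays_eq]

/-- Any function whose epigraph is the hull of the vertical rays agrees with `pval`. -/
lemma eq_pval_of_epi {x : Fin k → Eucl n} {t : Fin k → ℝ} {p : Eucl n → EReal}
    (hk : 0 < k) (hp : epi p = convexHull ℝ (verticalRays x t)) (z : Eucl n) :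
    p z = pval x t z := by
  have hepi : epi p = epi (pval x t) := by rw [hp, epi_pval_hull]
  have hiff : ∀ s : ℝ, p z ≤ (s : EReal) ↔ pval x t z ≤ (s : EReal) := by
    intro s
    have h1 : ((z, s) ∈ epi p) ↔ ((z, s) ∈ epi (pval x t)) := by rw [hepi]
    exact h1
  have hlow : ∃ m : ℝ, ∀ s : ℝ, pval x t z ≤ (s : EReal) → m ≤ s := by
    obtain ⟨i0⟩ : Nonempty (Fin k) := ⟨⟨0, hk⟩⟩
    refine ⟨Finset.univ.inf' ⟨i0, Finset.mem_univ _⟩ t, fun s hs => ?_⟩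
    obtain ⟨l, ⟨hl, _⟩, hle⟩ := pval_le_iff.1 hs
    refine le_trans ?_ hle
    calc Finset.univ.inf' ⟨i0, Finset.mem_univ _⟩ t = (∑ i, l i) * Finset.univ.inf' ⟨i0, Finset.mem_univ _⟩ t := by rw [hl.2, one_mul]
    _ = ∑ i, l i * Finset.univ.inf' ⟨i0, Finset.mem_univ _⟩ t := by rw [Finset.sum_mul]
    _ ≤ ∑ i, l i * t i := by
        refine Finset.sum_le_sum fun i _ => ?_
        exact mul_le_mul_of_nonneg_left (Finset.inf'_le _ (Finset.mem_univ i)) (hl.1 i)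
  have hpz : p z ≠ ⊥ := by
    intro hbot
    obtain ⟨m, hm⟩ := hlow
    have : pval x t z ≤ ((m - 1 : ℝ) : EReal) := by
      rw [← hiff]; rw [hbot]; exact bot_le
    linarith [hm _ this]
  exact eq_of_forall_real_le_iff hpz (pval_ne_bot x t z) hiff

/-- Slices of sublevel sets of `pval` are compact. -/
lemma isCompact_sublevel (x : Fin k → Eucl n) (t : Fin k → ℝ) (c : ℝ) :
    IsCompact {z : Eucl n | pval x t z ≤ (c : EReal)} := by
  have : {z : Eucl n | pval x t z ≤ (c : EReal)}
      = (fun l : Fin k → ℝ => ∑ i, l i • x i) ''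
        {l | l ∈ stdSimplex ℝ (Fin k) ∧ ∑ i, l i * t i ≤ c} := by
    ext z
    simp only [Set.mem_setOf_eq, Set.mem_image]
    rw [pval_le_iff]
    constructor
    · rintro ⟨l, ⟨hl, hx⟩, hle⟩; exact ⟨l, ⟨hl, hle⟩, hx⟩
    · rintro ⟨l, ⟨hl, hle⟩, hx⟩; exact ⟨l, ⟨hl, hx⟩, hle⟩
  rw [this]
  refine IsCompact.image ?_ (by continuity)
  refine (isCompact_stdSimplex _ _).inter_right ?_
  exact isClosed_le (continuous_wsum t) continuous_const

lemma measurable_expNeg_pval (x : Fin k → Eucl n) (t : Fin k → ℝ) :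
    Measurable (fun z => expNeg (pval x t z)) := by
  apply measurable_of_Iio
  intro c
  rcases le_or_gt c 0 with hc | hc
  · have : (fun z => expNeg (pval x t z)) ⁻¹' (Iio c) = ∅ := by
      ext z
      simp only [Set.mem_preimage, Set.mem_Iio, Set.mem_empty_iff_false, iff_false, not_lt]
      exact le_trans hc (expNeg_nonneg _)
    rw [this]; exact MeasurableSet.empty
  · have : (fun z => expNeg (pval x t z)) ⁻¹' (Iio c)
        = {z : Eucl n | pval x t z ≤ ((-Real.log c : ℝ) : EReal)}ᶜ := by
      ext z
      simp only [Set.mem_preimage, Set.mem_Iio, Set.mem_compl_iff, Set.mem_setOf_eq]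
      rw [← le_expNeg_iff (pval_ne_bot x t z) hc, not_le]
    rw [this]
    exact ((isCompact_sublevel x t _).isClosed.measurableSet).compl

/-- Minorant property: if the generators lie in the (convex) epigraph of `ψ`,
then `pval ≥ ψ`. -/
lemma psi_le_pval {ψ : Eucl n → EReal} (hconv : Convex ℝ (epi ψ))
    {x : Fin k → Eucl n} {t : Fin k → ℝ} (hψ : ∀ i, ψ (x i) ≤ ((t i : ℝ) : EReal))
    (z : Eucl n) : ψ z ≤ pval x t z := by
  by_cases hne : (comboSet x z).Nonempty
  · obtain ⟨l₀, hl₀, heq, _⟩ := pval_eq_min (t := t) hne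
    rw [heq]
    have hmem : (z, ∑ i, l₀ i * t i) ∈ epi ψ := by
      have := hconv.sum_mem (fun i (_ : i ∈ Finset.univ) => hl₀.1.1 i)
        (by rw [hl₀.1.2]) (fun i _ => show ((x i, t i) : Eucl n × ℝ) ∈ epi ψ from hψ i)
      have hpt : ∑ i, l₀ i • ((x i, t i) : Eucl n × ℝ) = (z, ∑ i, l₀ i * t i) := by
        rw [Prod.ext_iff]
        constructor
        · rw [Prod.fst_sum]; simp only [Prod.smul_fst]; exact hl₀.2
        · rw [Prod.snd_sum]; simp only [Prod.smul_snd]; simp [smul_eq_mul]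
      rwa [hpt] at this
    exact hmem
  · rw [pval_eq_top hne]; exact le_top

variable {n : ℕ} {ψ : Eucl n → EReal}


lemma isClosed_sublevel (hlsc : LowerSemicontinuous ψ) (c : EReal) :
    IsClosed {x : Eucl n | ψ x ≤ c} := hlsc.isClosed_preimage c

lemma growth (hbot : ∀ x, ψ x ≠ ⊥) (hconv : Convex ℝ (epi ψ))
    (hcoer : Tendsto ψ (cocompact (Eucl n)) (nhds ⊤)) (h0 : ψ 0 ≠ ⊤) :
    ∃ (R c₀ : ℝ), 1 ≤ R ∧ ψ 0 = ((c₀ : ℝ) : EReal) ∧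
      ∀ x : Eucl n, 2*R < ‖x‖ → (((c₀ + ‖x‖/(2*R)) : ℝ) : EReal) ≤ ψ x := by
  set c₀ := (ψ 0).toReal with hc₀def
  have hc0 : ψ 0 = ((c₀ : ℝ) : EReal) := (EReal.coe_toReal h0 (hbot 0)).symm
  have hev : ψ ⁻¹' (Ioi ((c₀ + 1 : ℝ) : EReal)) ∈ cocompact (Eucl n) := by
    have h1 : Ioi ((c₀ + 1 : ℝ) : EReal) ∈ nhds (⊤ : EReal) :=
      Ioi_mem_nhds (EReal.coe_lt_top _)
    exact mem_map.mp (hcoer h1)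
  rw [mem_cocompact] at hev
  obtain ⟨K, hK, hKc⟩ := hev
  obtain ⟨r, hr⟩ := hK.isBounded.subset_closedBall 0
  set R := max r 1 with hRdef
  have hR1 : (1:ℝ) ≤ R := le_max_right _ _
  have hRpos : (0:ℝ) < R := lt_of_lt_of_le one_pos hR1
  have key : ∀ y : Eucl n, R < ‖y‖ → ((c₀ + 1 : ℝ) : EReal) < ψ y := by
    intro y hy
    have hyK : y ∉ K := by
      intro hyK
      have h2 := hr hyK
      rw [mem_closedBall_zero_iff] at h2
      have : ‖y‖ ≤ R := le_trans h2 (le_max_left _ _)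
      linarith
    exact hKc hyK
  refine ⟨R, c₀, hR1, hc0, ?_⟩
  intro x hx
  have hxnorm : (0:ℝ) < ‖x‖ := by linarith
  by_cases htop : ψ x = ⊤
  · rw [htop]; exact le_top
  · obtain ⟨tval, hψx⟩ : ∃ tval : ℝ, ψ x = ((tval : ℝ) : EReal) :=
      ⟨(ψ x).toReal, (EReal.coe_toReal htop (hbot x)).symm⟩
    set θ := 2*R/‖x‖ with hθdef
    have hθ0 : 0 < θ := by positivity
    have hθ1 : θ < 1 := by
      rw [hθdef, div_lt_one hxnorm]; exact hx
    have mem1 : ((x, tval) : Eucl n × ℝ) ∈ epi ψ := le_of_eq hψx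
    have mem2 : (((0 : Eucl n), c₀) : Eucl n × ℝ) ∈ epi ψ := le_of_eq hc0
    have hcomb := hconv mem1 mem2 (le_of_lt hθ0) (by linarith : (0:ℝ) ≤ 1 - θ) (by ring)
    have hpt : θ • ((x, tval) : Eucl n × ℝ) + (1-θ) • (((0 : Eucl n), c₀) : Eucl n × ℝ)
        = ((θ • x : Eucl n), θ*tval + (1-θ)*c₀) := by
      rw [Prod.ext_iff]
      constructor
      · simp [Prod.smul_fst]
      · simp [Prod.smul_snd, smul_eq_mul]
    rw [hpt] at hcomb
    have hψθ : ψ (θ • x) ≤ ((θ*tval + (1-θ)*c₀ : ℝ) : EReal) := hcomb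
    have hnorm : ‖θ • x‖ = 2*R := by
      rw [norm_smul, Real.norm_eq_abs, abs_of_pos hθ0, hθdef]
      field_simp
    have hRlt : R < ‖θ • x‖ := by rw [hnorm]; linarith
    have hstrict := lt_of_lt_of_le (key _ hRlt) hψθ
    have hreal : c₀ + 1 < θ*tval + (1-θ)*c₀ := EReal.coe_lt_coe_iff.1 hstrict
    have h3 : 1 < θ * (tval - c₀) := by nlinarith
    have h4 : 1/θ < tval - c₀ := by
      rw [div_lt_iff₀ hθ0]; nlinarith
    have h5 : ‖x‖/(2*R) = 1/θ := by
      rw [hθdef]; field_simp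
    rw [hψx]
    apply EReal.coe_le_coe_iff.2
    rw [h5]; linarith

lemma lower_bound (hbot : ∀ x, ψ x ≠ ⊥) (hlsc : LowerSemicontinuous ψ) (C : ℝ) :
    ∃ m₀ : ℝ, ∀ x : Eucl n, ‖x‖ ≤ C → ((m₀ : ℝ) : EReal) ≤ ψ x := by
  by_contra h
  push_neg at h
  have h' : ∀ m₀ : ℝ, ∃ x : Eucl n, ‖x‖ ≤ C ∧ ψ x < ((m₀ : ℝ) : EReal) := by
    intro m₀
    obtain ⟨x, hx1, hx2⟩ := h m₀
    exact ⟨x, hx1, hx2⟩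
  set S : ℕ → Set (Eucl n) := fun j => {x | ‖x‖ ≤ C ∧ ψ x ≤ ((-(j:ℝ) : ℝ) : EReal)} with hS
  have hclosed : ∀ j, IsClosed (S j) := by
    intro j
    exact (isClosed_le continuous_norm continuous_const).inter (isClosed_sublevel hlsc _)
  have hcompact : ∀ j, IsCompact (S j) := by
    intro j
    refine (isCompact_closedBall (0 : Eucl n) C).of_isClosed_subset (hclosed j) ?_
    intro x hx
    rw [mem_closedBall_zero_iff]
    exact hx.1
  have hne : ∀ j, (S j).Nonempty := by
    intro j
    obtain ⟨x, hx1, hx2⟩ := h' (-(j:ℝ))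
    exact ⟨x, hx1, le_of_lt hx2⟩
  have hdir : Directed (· ⊇ ·) S := by
    intro a b
    refine ⟨max a b, ?_, ?_⟩
    · intro x hx
      refine ⟨hx.1, le_trans hx.2 ?_⟩
      apply EReal.coe_le_coe_iff.2
      simp only [neg_le_neg_iff]
      exact_mod_cast le_max_left a b
    · intro x hx
      refine ⟨hx.1, le_trans hx.2 ?_⟩
      apply EReal.coe_le_coe_iff.2
      simp only [neg_le_neg_iff]
      exact_mod_cast le_max_right a b
  obtain ⟨x0, hx0⟩ := IsCompact.nonempty_iInter_of_directed_nonempty_isCompact_isClosed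
    S hdir hne hcompact hclosed
  have hall : ∀ j : ℕ, ψ x0 ≤ ((-(j:ℝ) : ℝ) : EReal) := by
    intro j
    exact (Set.mem_iInter.1 hx0 j).2
  by_cases htop : ψ x0 = ⊤
  · have := hall 0
    rw [htop] at this
    exact absurd this (by simp)
  · obtain ⟨v, hψ⟩ : ∃ v : ℝ, ψ x0 = ((v : ℝ) : EReal) :=
      ⟨(ψ x0).toReal, (EReal.coe_toReal htop (hbot x0)).symm⟩
    set j := Nat.ceil (|v|) + 1 with hj
    have := hall j
    rw [hψ] at this
    have hvle : v ≤ -(j:ℝ) := EReal.coe_le_coe_iff.1 this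
    have : (j:ℝ) ≤ -v := by linarith
    have h1 : -v ≤ |v| := neg_le_abs v
    have h2 : |v| < (j:ℝ) := by
      rw [hj]
      push_cast
      exact lt_of_le_of_lt (Nat.le_ceil _) (by linarith)
    linarith

lemma chord_isCompact (hlsc : LowerSemicontinuous ψ)
    {R c₀ : ℝ} (hR : 0 < R)
    (hgrowth : ∀ x : Eucl n, 2*R < ‖x‖ → (((c₀ + ‖x‖/(2*R)) : ℝ) : EReal) ≤ ψ x)
    {u : Eucl n} (hu : ‖u‖ = 1) (z : Eucl n) (c : ℝ) :
    IsCompact {β : ℝ | ψ (z + β • u) ≤ ((c : ℝ) : EReal)} := by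
  have hcl : IsClosed {β : ℝ | ψ (z + β • u) ≤ ((c : ℝ) : EReal)} := by
    have hcont : Continuous (fun β : ℝ => z + β • u) := by continuity
    exact IsClosed.preimage hcont (isClosed_sublevel hlsc _)
  set M := max (2*R) (2*R*(c - c₀)) + ‖z‖ with hM
  refine (isCompact_Icc (a := -M) (b := M)).of_isClosed_subset hcl ?_
  intro β hβ
  simp only [Set.mem_setOf_eq] at hβ
  have hbound : ‖z + β • u‖ ≤ max (2*R) (2*R*(c - c₀)) := by
    rcases le_or_gt ‖z + β • u‖ (2*R) with h | h
    · exact le_trans h (le_max_left _ _)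
    · have h2 := le_trans (hgrowth _ h) hβ
      have h3 : c₀ + ‖z + β • u‖/(2*R) ≤ c := EReal.coe_le_coe_iff.1 h2
      have h4 : ‖z + β • u‖/(2*R) ≤ c - c₀ := by linarith
      have h5 : ‖z + β • u‖ ≤ 2*R*(c - c₀) := by
        rw [div_le_iff₀ (by positivity)] at h4
        linarith
      exact le_trans h5 (le_max_right _ _)
  have hβnorm : |β| ≤ ‖z + β • u‖ + ‖z‖ := by
    have : |β| = ‖β • u‖ := by rw [norm_smul, hu, mul_one, Real.norm_eq_abs]
    rw [this]
    calc ‖β • u‖ = ‖(z + β • u) - z‖ := by congr 1; abel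
    _ ≤ ‖z + β • u‖ + ‖z‖ := norm_sub_le _ _
  constructor
  · have : |β| ≤ M := by rw [hM]; linarith [hbound, hβnorm]
    linarith [neg_abs_le β]
  · have : |β| ≤ M := by rw [hM]; linarith [hbound, hβnorm]
    linarith [le_abs_self β]

/-- Integrability of an exponentially decaying majorant. -/
lemma lintegral_exp_decay (n : ℕ) {A ε : ℝ} (hε : 0 < ε) :
    ∫⁻ x : Eucl n, ENNReal.ofReal (A * Real.exp (-(ε*‖x‖))) < ⊤ := by
  set d : ℕ := n + 1 with hd
  set K := max 1 ((n+1:ℝ)/ε) with hK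
  have hK1 : (1:ℝ) ≤ K := le_max_left _ _
  have hKpos : (0:ℝ) < K := lt_of_lt_of_le one_pos hK1
  have hptwise : ∀ r : ℝ, 0 ≤ r → Real.exp (-(ε*r)) ≤ K^d * ((1+r)^d)⁻¹ := by
    intro r hr
    have h1 : 1 + ε*r/(n+1) ≤ Real.exp (ε*r/(n+1)) := by
      have := Real.add_one_le_exp (ε*r/(n+1))
      linarith
    have h2 : (1+r) ≤ K * (1 + ε*r/(n+1)) := by
      have hK2 : (n+1:ℝ)/ε ≤ K := le_max_right _ _
      have h3 : r ≤ K * (ε*r/(n+1)) := by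
        rw [mul_div_assoc']
        rw [le_div_iff₀ (by positivity : (0:ℝ) < (n:ℝ)+1)]
        calc r * ((n:ℝ)+1) = ((n+1:ℝ)/ε) * (ε * r) := by field_simp
        _ ≤ K * (ε * r) := by
            apply mul_le_mul_of_nonneg_right hK2 (by positivity)
      nlinarith
    have h4 : (1+r)^d ≤ K^d * Real.exp (ε*r) := by
      calc (1+r)^d ≤ (K * (1 + ε*r/(n+1)))^d := by
            apply pow_le_pow_left₀ (by linarith) h2
      _ = K^d * (1 + ε*r/(n+1))^d := mul_pow _ _ _
      _ ≤ K^d * (Real.exp (ε*r/(n+1)))^d := by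
            apply mul_le_mul_of_nonneg_left _ (by positivity)
            apply pow_le_pow_left₀ (by positivity) h1
      _ = K^d * Real.exp (ε*r) := by
            rw [← Real.exp_nat_mul]
            congr 1
            rw [hd]
            congr 1; push_cast; field_simp
    have h5 : (0:ℝ) < (1+r)^d := by positivity
    have h6 : (1+r)^d / Real.exp (ε*r) ≤ K^d := by
      rw [div_le_iff₀ (Real.exp_pos _)]; linarith
    have h7 : Real.exp (-(ε*r)) = ((1+r)^d)⁻¹ * ((1+r)^d / Real.exp (ε*r)) := by
      rw [Real.exp_neg]
      field_simp
    rw [h7]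
    calc ((1+r)^d)⁻¹ * ((1+r)^d / Real.exp (ε*r)) ≤ ((1+r)^d)⁻¹ * K^d :=
          mul_le_mul_of_nonneg_left h6 (by positivity)
    _ = K^d * ((1+r)^d)⁻¹ := mul_comm _ _
  -- now the integral
  have hnr : ((Module.finrank ℝ (Eucl n) : ℝ)) < ((d : ℝ)) := by
    rw [finrank_euclideanSpace_fin]
    rw [hd]
    push_cast
    linarith
  have hint : Integrable (fun x : Eucl n => (|A| * K^d) * ((1 + ‖x‖)^d)⁻¹) := by
    have h0 := (integrable_one_add_norm (E := Eucl n) (μ := volume) (r := (d:ℝ)) hnr)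
    have h1 := h0.const_mul (|A| * K^d)
    refine h1.congr ?_
    filter_upwards with x
    congr 1
    rw [← Real.rpow_natCast (1 + ‖x‖) d, ← Real.rpow_neg (by positivity)]
  have hmono : ∀ x : Eucl n, A * Real.exp (-(ε*‖x‖)) ≤ (|A| * K^d) * ((1 + ‖x‖)^d)⁻¹ := by
    intro x
    calc A * Real.exp (-(ε*‖x‖)) ≤ |A| * Real.exp (-(ε*‖x‖)) := by
          apply mul_le_mul_of_nonneg_right (le_abs_self A) (Real.exp_pos _).le
    _ ≤ |A| * (K^d * ((1+‖x‖)^d)⁻¹) := by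
          apply mul_le_mul_of_nonneg_left (hptwise ‖x‖ (norm_nonneg x)) (abs_nonneg A)
    _ = (|A| * K^d) * ((1 + ‖x‖)^d)⁻¹ := by ring
  calc ∫⁻ x : Eucl n, ENNReal.ofReal (A * Real.exp (-(ε*‖x‖)))
      ≤ ∫⁻ x : Eucl n, ENNReal.ofReal ((|A| * K^d) * ((1 + ‖x‖)^d)⁻¹) := by
        apply lintegral_mono
        intro x
        exact ENNReal.ofReal_le_ofReal (hmono x)
  _ < ⊤ := hint.lintegral_lt_top




open ENNReal

lemma exists_adapted_basis {m : ℕ} (u : Eucl (m+1)) (hu : ‖u‖ = 1) :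
    ∃ b : OrthonormalBasis (Fin (m+1)) ℝ (Eucl (m+1)), b 0 = u := by
  have hcard : Module.finrank ℝ (Eucl (m+1)) = Fintype.card (Fin (m+1)) := by
    simp [finrank_euclideanSpace_fin]
  have horth : Orthonormal ℝ (({0} : Set (Fin (m+1))).restrict (fun _ => u)) := by
    constructor
    · intro i; exact hu
    · intro i j hij
      exact absurd (Subsingleton.elim i j) hij
  obtain ⟨b, hb⟩ := horth.exists_orthonormalBasis_extension_of_card_eq hcard
  exact ⟨b, hb 0 rfl⟩

lemma decomp_eq {n : ℕ} {u : Eucl n} (hu : ‖u‖ = 1) {v v' : Eucl n}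
    (hv : (inner ℝ v u : ℝ) = 0) (hv' : (inner ℝ v' u : ℝ) = 0) {a a' : ℝ}
    (h : v + a • u = v' + a' • u) : v = v' ∧ a = a' := by
  have key : ∀ (x : Eucl n) (c : ℝ), (inner ℝ x u : ℝ) = 0 →
      (inner ℝ (x + c • u) u : ℝ) = c := by
    intro x c hx
    rw [inner_add_left, real_inner_smul_left, hx, real_inner_self_eq_norm_mul_norm, hu]
    ring
  have ha : a = a' := by
    have h1 := key v a hv
    have h2 := key v' a' hv'
    rw [← h1, h, h2]
  refine ⟨?_, ha⟩
  have := h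
  rw [ha] at this
  exact add_right_cancel this

/-- The line parametrization along `u` adapted to the basis `b`. -/
def lineParam {m : ℕ} (u : Eucl (m+1)) (b : OrthonormalBasis (Fin (m+1)) ℝ (Eucl (m+1))) :
    ℝ × (Fin m → ℝ) → Eucl (m+1) :=
  fun p => p.1 • u + ∑ i, p.2 i • b (Fin.succ i)

lemma lineParam_continuous {m : ℕ} (u : Eucl (m+1))
    (b : OrthonormalBasis (Fin (m+1)) ℝ (Eucl (m+1))) : Continuous (lineParam u b) := by
  unfold lineParam
  exact (continuous_fst.smul continuous_const).add
    (continuous_finset_sum _ fun i _ => ((continuous_apply i).comp continuous_snd).smul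
      continuous_const)

lemma lineParam_measurePreserving {m : ℕ} {u : Eucl (m+1)}
    (b : OrthonormalBasis (Fin (m+1)) ℝ (Eucl (m+1))) (hb0 : b 0 = u) :
    MeasurePreserving (lineParam u b) volume volume := by
  classical
  set Φ : Eucl (m+1) ≃ᵐ ℝ × (Fin m → ℝ) :=
    b.measurableEquiv.trans ((MeasurableEquiv.toLp 2 (Fin (m+1) → ℝ)).symm.trans
      (MeasurableEquiv.piFinSuccAbove (fun _ : Fin (m+1) => ℝ) 0)) with hΦ
  have hΦmp : MeasurePreserving Φ volume volume := by
    have h1 := b.measurePreserving_measurableEquiv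
    have h2 := EuclideanSpace.volume_preserving_symm_measurableEquiv_toLp (Fin (m+1))
    have h3 := volume_preserving_piFinSuccAbove (fun _ : Fin (m+1) => ℝ) 0
    exact (h3.comp (h2.comp h1))
  have hΦρ : ∀ p, Φ (lineParam u b p) = p := by
    rintro ⟨β, w⟩
    have hbb : ∀ i j : Fin (m+1), (inner ℝ (b i) (b j) : ℝ) = if i = j then 1 else 0 := by
      intro i j
      by_cases h : i = j
      · subst h
        rw [if_pos rfl, real_inner_self_eq_norm_mul_norm, b.orthonormal.1 i]
        norm_num
      · rw [if_neg h]
        exact b.orthonormal.2 h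
    have hco : ∀ j : Fin (m+1), (b.repr (lineParam u b (β, w))) j
        = β * (if j = 0 then 1 else 0) + ∑ i : Fin m, w i * (if j = Fin.succ i then 1 else 0) := by
      intro j
      rw [OrthonormalBasis.repr_apply_apply]
      unfold lineParam
      simp only
      rw [← hb0, inner_add_right, real_inner_smul_right, hbb, inner_sum]
      congr 1
      refine Finset.sum_congr rfl fun i _ => ?_
      rw [real_inner_smul_right, hbb]
    have hco0 : (b.repr (lineParam u b (β, w))) 0 = β := by
      rw [hco 0, if_pos rfl]
      have hz : ∀ i ∈ Finset.univ, w i * (if (0 : Fin (m+1)) = Fin.succ i then (1:ℝ) else 0) = 0 := by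
        intro i _
        rw [if_neg (fun h => (Fin.succ_ne_zero i) h.symm)]
        ring
      rw [Finset.sum_congr rfl hz]
      simp
    have hcoj : ∀ j : Fin m, (b.repr (lineParam u b (β, w))) (Fin.succ j) = w j := by
      intro j
      rw [hco (Fin.succ j), if_neg (Fin.succ_ne_zero j)]
      rw [Finset.sum_eq_single j]
      · rw [if_pos rfl]; ring
      · intro i _ hij
        rw [if_neg (fun h => hij (Fin.succ_injective _ h.symm))]
        ring
      · intro h; exact absurd (Finset.mem_univ j) h
    have : Φ (lineParam u b (β, w))
        = ((b.repr (lineParam u b (β, w))) 0,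
           fun j : Fin m => (b.repr (lineParam u b (β, w))) ((0 : Fin (m+1)).succAbove j)) := rfl
    rw [this]
    rw [Prod.ext_iff]
    constructor
    · exact hco0
    · funext j
      simp only
      rw [Fin.zero_succAbove]
      exact hcoj j
  have hρeq : lineParam u b = ⇑Φ.symm := by
    funext p
    apply Φ.injective
    rw [hΦρ p, MeasurableEquiv.apply_symm_apply]
  rw [hρeq]
  exact MeasurePreserving.symm Φ hΦmp



def Tset {n k : ℕ} (z : Fin k → Eucl n) (t : Fin k → ℝ) (Y : Eucl n) (c : ℝ) :
    Set (Fin k → ℝ) :=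
  {l | l ∈ stdSimplex ℝ (Fin k) ∧ ∑ i, l i • z i = Y ∧ ∑ i, l i * t i ≤ c}

lemma sum_shift {n k : ℕ} (z : Fin k → Eucl n) (γ' : Fin k → ℝ) (u : Eucl n)
    (l : Fin k → ℝ) :
    ∑ i, l i • (z i + γ' i • u) = (∑ i, l i • z i) + (∑ i, l i * γ' i) • u := by
  simp only [smul_add, smul_smul]
  rw [Finset.sum_add_distrib, Finset.sum_smul]

lemma inner_combo_zero {n k : ℕ} {u : Eucl n} {z : Fin k → Eucl n}
    (hz : ∀ i, (inner ℝ (z i) u : ℝ) = 0) (l : Fin k → ℝ) :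
    (inner ℝ (∑ i, l i • z i) u : ℝ) = 0 := by
  rw [sum_inner]
  refine Finset.sum_eq_zero fun i _ => ?_
  rw [real_inner_smul_left, hz i]
  ring

lemma slice_eq {m k : ℕ} {u : Eucl (m+1)} (hu : ‖u‖ = 1)
    {z : Fin k → Eucl (m+1)} (hz : ∀ i, (inner ℝ (z i) u : ℝ) = 0)
    (t γ' : Fin k → ℝ) {Y : Eucl (m+1)} (hY : (inner ℝ Y u : ℝ) = 0) {σ : ℝ} (hσ : 0 < σ) :
    {β : ℝ | σ ≤ expNeg (pval (fun i => z i + γ' i • u) t (β • u + Y))}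
      = (fun l => ∑ i, l i * γ' i) '' Tset z t Y (-Real.log σ) := by
  ext β
  simp only [Set.mem_setOf_eq, Set.mem_image]
  rw [le_expNeg_iff (pval_ne_bot _ _ _) hσ, pval_le_iff]
  constructor
  · rintro ⟨l, ⟨hl, hsum⟩, hle⟩
    rw [sum_shift] at hsum
    rw [add_comm (β • u) Y] at hsum
    obtain ⟨hY', hβ⟩ := decomp_eq hu (inner_combo_zero hz l) hY hsum
    exact ⟨l, ⟨hl, hY', hle⟩, hβ⟩
  · rintro ⟨l, ⟨hl, hY', hle⟩, hβ⟩
    refine ⟨l, ⟨hl, ?_⟩, hle⟩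
    rw [sum_shift, hY', hβ]
    exact add_comm _ _

lemma isCompact_Tset {n k : ℕ} (z : Fin k → Eucl n) (t : Fin k → ℝ) (Y : Eucl n) (c : ℝ) :
    IsCompact (Tset z t Y c) := by
  have heq : Tset z t Y c
      = stdSimplex ℝ (Fin k) ∩ ({l | ∑ i, l i • z i = Y} ∩ {l | ∑ i, l i * t i ≤ c}) := by
    rfl
  rw [heq]
  refine (isCompact_stdSimplex _ _).inter_right ?_
  refine IsClosed.inter ?_ ?_
  · exact isClosed_eq (by continuity) continuous_const
  · exact isClosed_le (continuous_wsum t) continuous_const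

lemma convex_Tset {n k : ℕ} (z : Fin k → Eucl n) (t : Fin k → ℝ) (Y : Eucl n) (c : ℝ) :
    Convex ℝ (Tset z t Y c) := by
  rintro l1 ⟨hl1, hz1, ht1⟩ l2 ⟨hl2, hz2, ht2⟩ a b ha hb hab
  refine ⟨convex_stdSimplex ℝ (Fin k) hl1 hl2 ha hb hab, ?_, ?_⟩
  · have : ∑ i, (a * l1 i + b * l2 i) • z i
        = a • ∑ i, l1 i • z i + b • ∑ i, l2 i • z i := by
      rw [Finset.smul_sum, Finset.smul_sum, ← Finset.sum_add_distrib]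
      refine Finset.sum_congr rfl fun i _ => ?_
      rw [add_smul, smul_smul, smul_smul]
    show ∑ i, (a * l1 i + b * l2 i) • z i = Y
    rw [this, hz1, hz2, ← add_smul, hab, one_smul]
  · show ∑ i, (a * l1 i + b * l2 i) * t i ≤ c
    have : ∑ i, (a * l1 i + b * l2 i) * t i
        = a * ∑ i, l1 i * t i + b * ∑ i, l2 i * t i := by
      rw [Finset.mul_sum, Finset.mul_sum, ← Finset.sum_add_distrib]
      refine Finset.sum_congr rfl fun i _ => ?_
      ring
    rw [this]
    calc a * ∑ i, l1 i * t i + b * ∑ i, l2 i * t i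
        ≤ a * c + b * c :=
          add_le_add (mul_le_mul_of_nonneg_left ht1 ha) (mul_le_mul_of_nonneg_left ht2 hb)
    _ = c := by rw [← add_mul, hab, one_mul]

/-- The weighting map as a linear map. -/
def wmap {k : ℕ} (γ' : Fin k → ℝ) : (Fin k → ℝ) →ₗ[ℝ] ℝ where
  toFun l := ∑ i, l i * γ' i
  map_add' a b := by
    simp only [Pi.add_apply, add_mul]
    rw [Finset.sum_add_distrib]
  map_smul' c a := by
    simp only [Pi.smul_apply, smul_eq_mul, RingHom.id_apply]
    rw [Finset.mul_sum]
    exact Finset.sum_congr rfl fun i _ => (mul_assoc _ _ _)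

lemma eq_Icc_of_compact_convex {S : Set ℝ} (hne : S.Nonempty) (hc : IsCompact S)
    (hv : Convex ℝ S) : S = Icc (sInf S) (sSup S) := by
  apply Set.Subset.antisymm
  · exact fun x hx => ⟨csInf_le hc.bddBelow hx, le_csSup hc.bddAbove hx⟩
  · intro x hx
    exact hv.ordConnected.out (hc.sInf_mem hne) (hc.sSup_mem hne) hx

lemma vol_image_midpoint {n k : ℕ} (z : Fin k → Eucl n) (t : Fin k → ℝ) (Y : Eucl n) (c : ℝ)
    (γ γ₁ γ₂ : Fin k → ℝ) (hmid : ∀ i, γ i = (γ₁ i + γ₂ i)/2) :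
    volume ((fun l => ∑ i, l i * γ i) '' Tset z t Y c)
      ≤ ENNReal.ofReal (1/2) * volume ((fun l => ∑ i, l i * γ₁ i) '' Tset z t Y c)
        + ENNReal.ofReal (1/2) * volume ((fun l => ∑ i, l i * γ₂ i) '' Tset z t Y c) := by
  by_cases hne : (Tset z t Y c).Nonempty
  · set S := Tset z t Y c with hS
    have hcpt := isCompact_Tset z t Y c
    have hcvx := convex_Tset z t Y c
    have hAfacts : ∀ γ' : Fin k → ℝ,
        ((fun l => ∑ i, l i * γ' i) '' S) = Icc (sInf ((fun l => ∑ i, l i * γ' i) '' S))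
          (sSup ((fun l => ∑ i, l i * γ' i) '' S)) ∧
        IsCompact ((fun l => ∑ i, l i * γ' i) '' S) := by
      intro γ'
      have hc2 : IsCompact ((fun l => ∑ i, l i * γ' i) '' S) :=
        hcpt.image (continuous_wsum γ')
      have hv2 : Convex ℝ ((fun l => ∑ i, l i * γ' i) '' S) := by
        have := hcvx.linear_image (wmap γ')
        exact this
      exact ⟨eq_Icc_of_compact_convex (hne.image _) hc2 hv2, hc2⟩
    have hkey : ∀ l ∈ S, ∑ i, l i * γ i = ((∑ i, l i * γ₁ i) + ∑ i, l i * γ₂ i)/2 := by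
      intro l _
      rw [← Finset.sum_add_distrib, Finset.sum_div]
      refine Finset.sum_congr rfl fun i _ => ?_
      rw [hmid i]
      ring
    -- suprema and infima
    have hAeq := (hAfacts γ).1
    have hA1eq := (hAfacts γ₁).1
    have hA2eq := (hAfacts γ₂).1
    have hcA := (hAfacts γ).2
    have hcA1 := (hAfacts γ₁).2
    have hcA2 := (hAfacts γ₂).2
    set A := (fun l => ∑ i, l i * γ i) '' S with hAdef
    set A₁ := (fun l => ∑ i, l i * γ₁ i) '' S with hA1def
    set A₂ := (fun l => ∑ i, l i * γ₂ i) '' S with hA2def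
    obtain ⟨lsup, hlsupS, hlsupv⟩ : ∃ l ∈ S, ∑ i, l i * γ i = sSup A := by
      obtain ⟨l, hl, hv⟩ := hcA.sSup_mem (hne.image _)
      exact ⟨l, hl, hv⟩
    obtain ⟨linf, hlinfS, hlinfv⟩ : ∃ l ∈ S, ∑ i, l i * γ i = sInf A := by
      obtain ⟨l, hl, hv⟩ := hcA.sInf_mem (hne.image _)
      exact ⟨l, hl, hv⟩
    have hbdd₁ : BddAbove A₁ := hcA1.bddAbove
    have hbdd₂ : BddAbove A₂ := hcA2.bddAbove
    have hbddb₁ : BddBelow A₁ := hcA1.bddBelow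
    have hbddb₂ : BddBelow A₂ := hcA2.bddBelow
    have hsup : sSup A ≤ (sSup A₁ + sSup A₂)/2 := by
      rw [← hlsupv, hkey lsup hlsupS]
      have h1 : ∑ i, lsup i * γ₁ i ≤ sSup A₁ := le_csSup hbdd₁ ⟨lsup, hlsupS, rfl⟩
      have h2 : ∑ i, lsup i * γ₂ i ≤ sSup A₂ := le_csSup hbdd₂ ⟨lsup, hlsupS, rfl⟩
      linarith
    have hinf : (sInf A₁ + sInf A₂)/2 ≤ sInf A := by
      rw [← hlinfv, hkey linf hlinfS]
      have h1 : sInf A₁ ≤ ∑ i, linf i * γ₁ i := csInf_le hbddb₁ ⟨linf, hlinfS, rfl⟩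
      have h2 : sInf A₂ ≤ ∑ i, linf i * γ₂ i := csInf_le hbddb₂ ⟨linf, hlinfS, rfl⟩
      linarith
    have hlen₁ : 0 ≤ sSup A₁ - sInf A₁ := by
      obtain ⟨l, hl⟩ := hne
      have h1 : sInf A₁ ≤ ∑ i, l i * γ₁ i := csInf_le hbddb₁ ⟨l, hl, rfl⟩
      have h2 : ∑ i, l i * γ₁ i ≤ sSup A₁ := le_csSup hbdd₁ ⟨l, hl, rfl⟩
      linarith
    have hlen₂ : 0 ≤ sSup A₂ - sInf A₂ := by
      obtain ⟨l, hl⟩ := hne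
      have h1 : sInf A₂ ≤ ∑ i, l i * γ₂ i := csInf_le hbddb₂ ⟨l, hl, rfl⟩
      have h2 : ∑ i, l i * γ₂ i ≤ sSup A₂ := le_csSup hbdd₂ ⟨l, hl, rfl⟩
      linarith
    rw [hAeq, hA1eq, hA2eq]
    rw [Real.volume_Icc, Real.volume_Icc, Real.volume_Icc]
    calc ENNReal.ofReal (sSup A - sInf A)
        ≤ ENNReal.ofReal ((1/2)*(sSup A₁ - sInf A₁) + (1/2)*(sSup A₂ - sInf A₂)) := by
          apply ENNReal.ofReal_le_ofReal
          linarith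
    _ = ENNReal.ofReal ((1/2)*(sSup A₁ - sInf A₁))
          + ENNReal.ofReal ((1/2)*(sSup A₂ - sInf A₂)) := by
          rw [ENNReal.ofReal_add (by linarith) (by linarith)]
    _ = ENNReal.ofReal (1/2) * ENNReal.ofReal (sSup A₁ - sInf A₁)
          + ENNReal.ofReal (1/2) * ENNReal.ofReal (sSup A₂ - sInf A₂) := by
          rw [ENNReal.ofReal_mul (by norm_num), ENNReal.ofReal_mul (by norm_num)]
  · rw [Set.not_nonempty_iff_eq_empty.1 hne]
    simp



lemma half_add_half : ENNReal.ofReal (1/2) + ENNReal.ofReal (1/2) = 1 := by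
  rw [← ENNReal.ofReal_add (by norm_num) (by norm_num)]
  norm_num

lemma key_ineq {m : ℕ} {u : Eucl (m+1)} (hu : ‖u‖ = 1) {k : ℕ}
    (z : Fin k → Eucl (m+1)) (hz : ∀ i, (inner ℝ (z i) u : ℝ) = 0)
    (t γ γ₁ γ₂ : Fin k → ℝ) (hmid : ∀ i, γ i = (γ₁ i + γ₂ i)/2) :
    ∫⁻ x : Eucl (m+1), ENNReal.ofReal (expNeg (pval (fun i => z i + γ i • u) t x)) ≤
      max (∫⁻ x : Eucl (m+1), ENNReal.ofReal (expNeg (pval (fun i => z i + γ₁ i • u) t x)))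
          (∫⁻ x : Eucl (m+1), ENNReal.ofReal (expNeg (pval (fun i => z i + γ₂ i • u) t x))) := by
  classical
  obtain ⟨b, hb0⟩ := exists_adapted_basis u hu
  set Y : (Fin m → ℝ) → Eucl (m+1) := fun w => ∑ i, w i • b (Fin.succ i) with hYdef
  have hYorth : ∀ w, (inner ℝ (Y w) u : ℝ) = 0 := by
    intro w
    rw [hYdef]
    simp only
    rw [sum_inner]
    refine Finset.sum_eq_zero fun i _ => ?_
    rw [real_inner_smul_left, ← hb0, b.orthonormal.2 (Fin.succ_ne_zero i)]
    ring
  have hFmeas : ∀ γ' : Fin k → ℝ,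
      Measurable (fun x : Eucl (m+1) =>
        ENNReal.ofReal (expNeg (pval (fun i => z i + γ' i • u) t x))) :=
    fun γ' => (measurable_expNeg_pval _ _).ennreal_ofReal
  have hrepr : ∀ γ' : Fin k → ℝ,
      ∫⁻ x : Eucl (m+1), ENNReal.ofReal (expNeg (pval (fun i => z i + γ' i • u) t x))
        = ∫⁻ w : Fin m → ℝ, ∫⁻ β : ℝ,
            ENNReal.ofReal (expNeg (pval (fun i => z i + γ' i • u) t (β • u + Y w))) := by
    intro γ'
    calc ∫⁻ x : Eucl (m+1), ENNReal.ofReal (expNeg (pval (fun i => z i + γ' i • u) t x))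
        = ∫⁻ p : ℝ × (Fin m → ℝ), ENNReal.ofReal
            (expNeg (pval (fun i => z i + γ' i • u) t (lineParam u b p))) :=
          ((lineParam_measurePreserving b hb0).lintegral_comp (hFmeas γ')).symm
    _ = ∫⁻ p : ℝ × (Fin m → ℝ), ENNReal.ofReal
            (expNeg (pval (fun i => z i + γ' i • u) t (lineParam u b p)))
            ∂((volume : Measure ℝ).prod (volume : Measure (Fin m → ℝ))) := by
          rfl
    _ = ∫⁻ w : Fin m → ℝ, ∫⁻ β : ℝ, ENNReal.ofReal
            (expNeg (pval (fun i => z i + γ' i • u) t (lineParam u b (β, w)))) := by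
          refine lintegral_prod_symm _ ?_
          exact ((hFmeas γ').comp (lineParam_continuous u b).measurable).aemeasurable
    _ = ∫⁻ w : Fin m → ℝ, ∫⁻ β : ℝ, ENNReal.ofReal
            (expNeg (pval (fun i => z i + γ' i • u) t (β • u + Y w))) := rfl
  have hW : ∀ (γ' : Fin k → ℝ) (w : Fin m → ℝ), Measurable (fun σ : ℝ =>
      volume {β : ℝ | σ ≤ expNeg (pval (fun i => z i + γ' i • u) t (β • u + Y w))}) := by
    intro γ' w
    apply Antitone.measurable
    intro σ₁ σ₂ h
    apply measure_mono
    intro β hβ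
    exact le_trans h hβ
  have hlinemeas : ∀ (γ' : Fin k → ℝ) (w : Fin m → ℝ), Measurable (fun β : ℝ =>
      expNeg (pval (fun i => z i + γ' i • u) t (β • u + Y w))) := by
    intro γ' w
    have hc : Continuous (fun β : ℝ => β • u + Y w) :=
      (continuous_id.smul continuous_const).add continuous_const
    exact (measurable_expNeg_pval _ _).comp hc.measurable
  have hlayer : ∀ (γ' : Fin k → ℝ) (w : Fin m → ℝ),
      (∫⁻ β : ℝ, ENNReal.ofReal (expNeg (pval (fun i => z i + γ' i • u) t (β • u + Y w))))
        = ∫⁻ σ in Set.Ioi (0:ℝ), volume {β : ℝ |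
            σ ≤ expNeg (pval (fun i => z i + γ' i • u) t (β • u + Y w))} :=
    fun γ' w => lintegral_eq_lintegral_meas_le volume
      (Filter.Eventually.of_forall fun β => expNeg_nonneg _) (hlinemeas γ' w).aemeasurable
  have hline : ∀ w : Fin m → ℝ,
      (∫⁻ β : ℝ, ENNReal.ofReal (expNeg (pval (fun i => z i + γ i • u) t (β • u + Y w))))
      ≤ ENNReal.ofReal (1/2) *
          (∫⁻ β : ℝ, ENNReal.ofReal (expNeg (pval (fun i => z i + γ₁ i • u) t (β • u + Y w))))
        + ENNReal.ofReal (1/2) *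
          (∫⁻ β : ℝ, ENNReal.ofReal (expNeg (pval (fun i => z i + γ₂ i • u) t (β • u + Y w)))) := by
    intro w
    rw [hlayer γ w, hlayer γ₁ w, hlayer γ₂ w]
    calc (∫⁻ σ in Set.Ioi (0:ℝ), volume {β : ℝ |
            σ ≤ expNeg (pval (fun i => z i + γ i • u) t (β • u + Y w))})
        ≤ ∫⁻ σ in Set.Ioi (0:ℝ),
            (ENNReal.ofReal (1/2) * volume {β : ℝ |
              σ ≤ expNeg (pval (fun i => z i + γ₁ i • u) t (β • u + Y w))}
            + ENNReal.ofReal (1/2) * volume {β : ℝ |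
              σ ≤ expNeg (pval (fun i => z i + γ₂ i • u) t (β • u + Y w))}) := by
          refine setLIntegral_mono (((hW γ₁ w).const_mul _).add ((hW γ₂ w).const_mul _)) ?_
          intro σ hσ
          rw [slice_eq hu hz t γ (hYorth w) hσ, slice_eq hu hz t γ₁ (hYorth w) hσ,
            slice_eq hu hz t γ₂ (hYorth w) hσ]
          exact vol_image_midpoint z t (Y w) (-Real.log σ) γ γ₁ γ₂ hmid
    _ = ENNReal.ofReal (1/2) * (∫⁻ σ in Set.Ioi (0:ℝ), volume {β : ℝ |
            σ ≤ expNeg (pval (fun i => z i + γ₁ i • u) t (β • u + Y w))})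
        + ENNReal.ofReal (1/2) * (∫⁻ σ in Set.Ioi (0:ℝ), volume {β : ℝ |
            σ ≤ expNeg (pval (fun i => z i + γ₂ i • u) t (β • u + Y w))}) := by
          rw [lintegral_add_left ((hW γ₁ w).const_mul _)]
          rw [lintegral_const_mul _ (hW γ₁ w), lintegral_const_mul _ (hW γ₂ w)]
  have hImeas : ∀ γ' : Fin k → ℝ, Measurable (fun w : Fin m → ℝ => ∫⁻ β : ℝ,
      ENNReal.ofReal (expNeg (pval (fun i => z i + γ' i • u) t (β • u + Y w)))) := by
    intro γ'
    apply Measurable.lintegral_prod_left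
    exact (hFmeas γ').comp (lineParam_continuous u b).measurable
  rw [hrepr γ, hrepr γ₁, hrepr γ₂]
  calc (∫⁻ w : Fin m → ℝ, ∫⁻ β : ℝ,
        ENNReal.ofReal (expNeg (pval (fun i => z i + γ i • u) t (β • u + Y w))))
      ≤ ∫⁻ w : Fin m → ℝ,
          (ENNReal.ofReal (1/2) * (∫⁻ β : ℝ, ENNReal.ofReal
            (expNeg (pval (fun i => z i + γ₁ i • u) t (β • u + Y w))))
          + ENNReal.ofReal (1/2) * (∫⁻ β : ℝ, ENNReal.ofReal
            (expNeg (pval (fun i => z i + γ₂ i • u) t (β • u + Y w))))) :=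
        lintegral_mono hline
  _ = ENNReal.ofReal (1/2) * (∫⁻ w : Fin m → ℝ, ∫⁻ β : ℝ, ENNReal.ofReal
            (expNeg (pval (fun i => z i + γ₁ i • u) t (β • u + Y w))))
        + ENNReal.ofReal (1/2) * (∫⁻ w : Fin m → ℝ, ∫⁻ β : ℝ, ENNReal.ofReal
            (expNeg (pval (fun i => z i + γ₂ i • u) t (β • u + Y w)))) := by
        rw [lintegral_add_left ((hImeas γ₁).const_mul _)]
        rw [lintegral_const_mul _ (hImeas γ₁), lintegral_const_mul _ (hImeas γ₂)]
  _ ≤ max (∫⁻ w : Fin m → ℝ, ∫⁻ β : ℝ, ENNReal.ofReal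
            (expNeg (pval (fun i => z i + γ₁ i • u) t (β • u + Y w))))
          (∫⁻ w : Fin m → ℝ, ∫⁻ β : ℝ, ENNReal.ofReal
            (expNeg (pval (fun i => z i + γ₂ i • u) t (β • u + Y w)))) := by
        set M₁ := ∫⁻ w : Fin m → ℝ, ∫⁻ β : ℝ, ENNReal.ofReal
            (expNeg (pval (fun i => z i + γ₁ i • u) t (β • u + Y w)))
        set M₂ := ∫⁻ w : Fin m → ℝ, ∫⁻ β : ℝ, ENNReal.ofReal
            (expNeg (pval (fun i => z i + γ₂ i • u) t (β • u + Y w)))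
        calc ENNReal.ofReal (1/2) * M₁ + ENNReal.ofReal (1/2) * M₂
            ≤ ENNReal.ofReal (1/2) * max M₁ M₂ + ENNReal.ofReal (1/2) * max M₁ M₂ :=
              add_le_add (mul_le_mul_right (le_max_left _ _) _)
                (mul_le_mul_right (le_max_right _ _) _)
        _ = (ENNReal.ofReal (1/2) + ENNReal.ofReal (1/2)) * max M₁ M₂ := (add_mul _ _ _).symm
        _ = 1 * max M₁ M₂ := by rw [half_add_half]
        _ = max M₁ M₂ := one_mul _



lemma negLog_f_eq {n : ℕ} {f : Eucl n → ℝ} {ψ : Eucl n → EReal}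
    (hbot : ∀ x, ψ x ≠ ⊥) (hfeq : ∀ x, f x = expNeg (ψ x)) (x : Eucl n) :
    negLog (f x) = ψ x := by rw [hfeq x, negLog_expNeg _ (hbot x)]

lemma PN_elim {n N : ℕ} {f q : Eucl n → ℝ} (hq : q ∈ PN N f) :
    ∃ (k : ℕ) (x : Fin k → Eucl n) (t : Fin k → ℝ), 1 ≤ k ∧ k ≤ N ∧
      (∀ i, negLog (f (x i)) ≤ ((t i : ℝ) : EReal)) ∧
      ∀ y, q y = expNeg (pval x t y) := by
  obtain ⟨k, hk1, hkN, p, ⟨x, t, hxt, hepi⟩, hqe⟩ := hq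
  exact ⟨k, x, t, hk1, hkN, hxt, fun y => by rw [hqe y, eq_pval_of_epi hk1 hepi y]⟩

lemma PN_intro {n N : ℕ} (f : Eucl n → ℝ) {k : ℕ} (hk1 : 1 ≤ k) (hkN : k ≤ N)
    (x : Fin k → Eucl n) (t : Fin k → ℝ)
    (hxt : ∀ i, negLog (f (x i)) ≤ ((t i : ℝ) : EReal)) :
    (fun y => expNeg (pval x t y)) ∈ PN N f :=
  ⟨k, hk1, hkN, pval x t, ⟨x, t, hxt, epi_pval_hull x t⟩, fun _ => rfl⟩

lemma pval_le_f {n : ℕ} {f : Eucl n → ℝ} {ψ : Eucl n → EReal}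
    (hbot : ∀ x, ψ x ≠ ⊥) (hconv : Convex ℝ (epi ψ)) (hfeq : ∀ x, f x = expNeg (ψ x))
    {k : ℕ} {x : Fin k → Eucl n} {t : Fin k → ℝ}
    (hxt : ∀ i, ψ (x i) ≤ ((t i : ℝ) : EReal)) (y : Eucl n) :
    expNeg (pval x t y) ≤ f y := by
  rw [hfeq y]
  exact expNeg_le_expNeg (hbot y) (psi_le_pval hconv hxt y)

lemma totalMass_eq_toReal {n : ℕ} {q : Eucl n → ℝ} (hmeas : Measurable q)
    (hpos : ∀ x, 0 ≤ q x) :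
    totalMass q = (∫⁻ x, ENNReal.ofReal (q x)).toReal := by
  rw [totalMass, integral_eq_lintegral_of_nonneg_ae (Filter.Eventually.of_forall hpos)
    hmeas.aestronglyMeasurable]

lemma reflection_decomp {n : ℕ} {u : Eucl n} (hu : ‖u‖ = 1) {z : Eucl n}
    (hz : (inner ℝ z u : ℝ) = 0) (c : ℝ) :
    (Submodule.reflection ((ℝ ∙ u)ᗮ)) (z + c • u) = z + (-c) • u := by
  rw [map_add, _root_.map_smul]
  have h1 : (Submodule.reflection ((ℝ ∙ u)ᗮ)) z = z := by
    apply Submodule.reflection_mem_subspace_eq_self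
    rw [Submodule.mem_orthogonal_singleton_iff_inner_left]
    exact hz
  have h2 : (Submodule.reflection ((ℝ ∙ u)ᗮ)) u = -u :=
    Submodule.reflection_orthogonalComplement_singleton_eq_neg u
  rw [h1, h2, smul_neg, neg_smul]

lemma pval_reflect {n : ℕ} {u : Eucl n} (hu : ‖u‖ = 1) {k : ℕ}
    {z : Fin k → Eucl n} (hz : ∀ i, (inner ℝ (z i) u : ℝ) = 0) (t γ' : Fin k → ℝ)
    (v : Eucl n) :
    pval (fun i => z i + γ' i • u) t v
      = pval (fun i => z i + (-γ' i) • u) t ((Submodule.reflection ((ℝ ∙ u)ᗮ)) v) := by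
  have hRsum : ∀ l : Fin k → ℝ,
      (Submodule.reflection ((ℝ ∙ u)ᗮ)) (∑ i, l i • (z i + γ' i • u))
        = ∑ i, l i • (z i + (-γ' i) • u) := by
    intro l
    rw [map_sum]
    refine Finset.sum_congr rfl fun i _ => ?_
    rw [_root_.map_smul, reflection_decomp hu (hz i)]
  have hcombo : comboSet (fun i => z i + γ' i • u) v
      = comboSet (fun i => z i + (-γ' i) • u) ((Submodule.reflection ((ℝ ∙ u)ᗮ)) v) := by
    ext l
    simp only [comboSet, Set.mem_setOf_eq, and_congr_right_iff]
    intro _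
    constructor
    · intro h
      rw [← hRsum l, h]
    · intro h
      apply (Submodule.reflection ((ℝ ∙ u)ᗮ)).injective
      rw [hRsum l, h]
  simp only [pval, hcombo]

lemma steiner_extract {n : ℕ} {f g : Eucl n → ℝ} {ψ : Eucl n → EReal}
    (hbot : ∀ x, ψ x ≠ ⊥) (hconv : Convex ℝ (epi ψ)) (hlsc : LowerSemicontinuous ψ)
    (hfeq : ∀ x, f x = expNeg (ψ x))
    {R c₀ : ℝ} (hR : 0 < R)
    (hgrowth : ∀ x : Eucl n, 2*R < ‖x‖ → (((c₀ + ‖x‖/(2*R)) : ℝ) : EReal) ≤ ψ x)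
    {u : Eucl n} (hu : ‖u‖ = 1) (hg : IsSteinerSymmetral u f g)
    {y : Eucl n} {t : ℝ} (hyt : negLog (g y) ≤ ((t : ℝ) : EReal)) :
    ∃ (z : Eucl n) (τ μ : ℝ), (inner ℝ z u : ℝ) = 0 ∧ y = z + τ • u ∧
      ψ (z + (τ + μ) • u) ≤ ((t : ℝ) : EReal) ∧
      ψ (z + (μ - τ) • u) ≤ ((t : ℝ) : EReal) := by
  have hgy : 0 < g y := by
    by_contra hcon
    push_neg at hcon
    rw [negLog, if_pos hcon] at hyt
    exact absurd hyt (by simp)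
  have hexp : Real.exp (-t) ≤ g y := by
    rw [negLog, if_neg (not_le.2 hgy)] at hyt
    have h1 : -Real.log (g y) ≤ t := EReal.coe_le_coe_iff.1 hyt
    calc Real.exp (-t) ≤ Real.exp (Real.log (g y)) := Real.exp_le_exp.2 (by linarith)
    _ = g y := Real.exp_log hgy
  have hmem : ((y, Real.exp (-t)) : Eucl n × ℝ) ∈ hyp g := ⟨Real.exp_pos _, hexp⟩
  have hg' : hyp g = steinerSet u (hyp f) := hg
  rw [hg'] at hmem
  obtain ⟨h, ⟨hperp, hne⟩, τ, hτ, heq⟩ := hmem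
  rw [Prod.ext_iff] at heq
  obtain ⟨hy1, hy2⟩ := heq
  have hLeq : lineSet u (hyp f) h = {β : ℝ | ψ (h.1 + β • u) ≤ ((t : ℝ) : EReal)} := by
    ext β
    simp only [lineSet, hyp, Set.mem_setOf_eq]
    rw [← hy2]
    constructor
    · rintro ⟨_, h2⟩
      rw [hfeq] at h2
      have h3 := (le_expNeg_iff (hbot _) (Real.exp_pos _)).1 h2
      rwa [Real.log_exp, neg_neg] at h3
    · intro hψβ
      refine ⟨Real.exp_pos _, ?_⟩
      rw [hfeq, le_expNeg_iff (hbot _) (Real.exp_pos _), Real.log_exp, neg_neg]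
      exact hψβ
  have hLcpt : IsCompact (lineSet u (hyp f) h) := by
    rw [hLeq]
    exact chord_isCompact hlsc hR hgrowth hu h.1 t
  have hSup := hLcpt.sSup_mem hne
  have hInf := hLcpt.sInf_mem hne
  rw [hLeq] at hSup hInf hτ
  have hchordcvx : Convex ℝ {β : ℝ | ψ (h.1 + β • u) ≤ ((t : ℝ) : EReal)} := by
    intro β₁ h1 β₂ h2 a b ha hb hab
    have m1 : ((h.1 + β₁ • u, t) : Eucl n × ℝ) ∈ epi ψ := h1
    have m2 : ((h.1 + β₂ • u, t) : Eucl n × ℝ) ∈ epi ψ := h2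
    have hcc := hconv m1 m2 ha hb hab
    have hpt : a • ((h.1 + β₁ • u, t) : Eucl n × ℝ) + b • ((h.1 + β₂ • u, t) : Eucl n × ℝ)
        = ((h.1 + (a*β₁ + b*β₂) • u : Eucl n), t) := by
      rw [Prod.ext_iff]
      constructor
      · show a • (h.1 + β₁ • u) + b • (h.1 + β₂ • u) = h.1 + (a*β₁ + b*β₂) • u
        rw [smul_add, smul_add, smul_smul, smul_smul]
        rw [add_add_add_comm, ← add_smul, hab, one_smul, ← add_smul]
      · show a • t + b • t = t
        rw [smul_eq_mul, smul_eq_mul, ← add_mul, hab, one_mul]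
    rw [hpt] at hcc
    exact hcc
  set S := sSup {β : ℝ | ψ (h.1 + β • u) ≤ ((t : ℝ) : EReal)} with hSdef
  set I := sInf {β : ℝ | ψ (h.1 + β • u) ≤ ((t : ℝ) : EReal)} with hIdef
  have hIcc : ∀ β ∈ Set.Icc I S, ψ (h.1 + β • u) ≤ ((t : ℝ) : EReal) := by
    intro β hβ
    exact hchordcvx.ordConnected.out hInf hSup hβ
  obtain ⟨hτ1, hτ2⟩ := abs_le.1 hτ
  refine ⟨h.1, τ, (S + I)/2, hperp, hy1, ?_, ?_⟩
  · apply hIcc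
    constructor <;> [linarith; linarith]
  · apply hIcc
    constructor <;> [linarith; linarith]

end SteinerAux

/-- For `f ∈ LC_c(ℝⁿ)` and any hyperplane `H = u^⊥`, the maximum of `J(p)` over
`p ∈ 𝒫_N(f)` is at least the maximum of `J(q)` over `q ∈ 𝒫_N(S_H f)`. -/
theorem max_totalMass_minorant_ge_of_steiner
    (n N : ℕ) (hn : 1 ≤ n) (hN : n + 2 ≤ N)
    (f g : Eucl n → ℝ) (hf : MemLCc f)
    (u : Eucl n) (hu : ‖u‖ = 1) (hg : IsSteinerSymmetral u f g) :
    sSup {r : ℝ | ∃ q ∈ PN N g, r = totalMass q} ≤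
      sSup {r : ℝ | ∃ q ∈ PN N f, r = totalMass q} := by
  classical
  open SteinerAux in
  obtain ⟨ψ, hbot, hconv, hlsc, hcoer, hdom, h0, hspan, hfeq⟩ := hf
  obtain ⟨R, c₀, hR1, hc0, hgrowth⟩ := SteinerAux.growth hbot hconv hcoer h0
  have hRpos : (0:ℝ) < R := by linarith
  obtain ⟨m₀, hm₀⟩ := SteinerAux.lower_bound hbot hlsc (2*R)
  set ε : ℝ := 1/(2*R) with hεdef
  have hε : 0 < ε := by positivity
  set A : ℝ := max (Real.exp (-m₀) * Real.exp 1) (Real.exp (-c₀)) with hAdef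
  have hdecay : ∀ x : Eucl n, f x ≤ A * Real.exp (-(ε*‖x‖)) := by
    intro x
    rcases le_or_gt ‖x‖ (2*R) with hx | hx
    · have h1 : f x ≤ Real.exp (-m₀) := by
        rw [hfeq x]
        calc expNeg (ψ x) ≤ expNeg ((m₀ : ℝ) : EReal) :=
              SteinerAux.expNeg_le_expNeg (by simp) (hm₀ x hx)
        _ = Real.exp (-m₀) := SteinerAux.expNeg_coe m₀
      have h2 : Real.exp (-m₀) ≤ A * Real.exp (-(ε*‖x‖)) := by
        have hεx : ε*‖x‖ ≤ 1 := by
          rw [hεdef, div_mul_eq_mul_div, one_mul, div_le_one (by positivity)]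
          exact hx
        have hεx0 : 0 ≤ ε*‖x‖ := by positivity
        calc Real.exp (-m₀) = (Real.exp (-m₀) * Real.exp 1) * Real.exp (-1) := by
              rw [mul_assoc, ← Real.exp_add]; norm_num
        _ ≤ (Real.exp (-m₀) * Real.exp 1) * Real.exp (-(ε*‖x‖)) := by
              apply mul_le_mul_of_nonneg_left _ (by positivity)
              exact Real.exp_le_exp.2 (by linarith)
        _ ≤ A * Real.exp (-(ε*‖x‖)) := by
              apply mul_le_mul_of_nonneg_right (le_max_left _ _) (Real.exp_pos _).le
      linarith
    · have h1 : f x ≤ Real.exp (-(c₀ + ε*‖x‖)) := by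
        rw [hfeq x]
        calc expNeg (ψ x) ≤ expNeg (((c₀ + ‖x‖/(2*R)) : ℝ) : EReal) :=
              SteinerAux.expNeg_le_expNeg (by simp) (hgrowth x hx)
        _ = Real.exp (-(c₀ + ‖x‖/(2*R))) := SteinerAux.expNeg_coe _
        _ = Real.exp (-(c₀ + ε*‖x‖)) := by
              congr 1
              rw [hεdef]
              ring
      calc f x ≤ Real.exp (-(c₀ + ε*‖x‖)) := h1
      _ = Real.exp (-c₀) * Real.exp (-(ε*‖x‖)) := by
            rw [← Real.exp_add]; ring_nf
      _ ≤ A * Real.exp (-(ε*‖x‖)) :=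
            mul_le_mul_of_nonneg_right (le_max_right _ _) (Real.exp_pos _).le
  have hFin : (∫⁻ x : Eucl n, ENNReal.ofReal (f x)) < ⊤ :=
    lt_of_le_of_lt (lintegral_mono fun x => ENNReal.ofReal_le_ofReal (hdecay x))
      (SteinerAux.lintegral_exp_decay n hε)
  have hnegf := SteinerAux.negLog_f_eq hbot hfeq
  have hmassle : ∀ {k : ℕ} (x : Fin k → Eucl n) (t : Fin k → ℝ),
      (∀ i, ψ (x i) ≤ ((t i : ℝ) : EReal)) →
      (∫⁻ v, ENNReal.ofReal (expNeg (SteinerAux.pval x t v)))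
        ≤ ∫⁻ x : Eucl n, ENNReal.ofReal (f x) := by
    intro k x t hxt
    apply lintegral_mono
    intro v
    exact ENNReal.ofReal_le_ofReal (SteinerAux.pval_le_f hbot hconv hfeq hxt v)
  set Lf := {r : ℝ | ∃ q ∈ PN N f, r = totalMass q} with hLf
  have hbdd : BddAbove Lf := by
    refine ⟨(∫⁻ x : Eucl n, ENNReal.ofReal (f x)).toReal, ?_⟩
    rintro r ⟨q, hq, rfl⟩
    obtain ⟨k, x, t, hk1, hkN, hxt, hqeq⟩ := SteinerAux.PN_elim hq
    have hxt' : ∀ i, ψ (x i) ≤ ((t i : ℝ) : EReal) := fun i => by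
      rw [← hnegf]; exact hxt i
    have hqfun : q = fun v => expNeg (SteinerAux.pval x t v) := funext hqeq
    rw [hqfun, SteinerAux.totalMass_eq_toReal (SteinerAux.measurable_expNeg_pval x t)
      (fun v => SteinerAux.expNeg_nonneg _)]
    exact ENNReal.toReal_mono hFin.ne (hmassle x t hxt')
  have hsupnn : 0 ≤ sSup Lf := by
    apply Real.sSup_nonneg
    rintro r ⟨q, hq, rfl⟩
    obtain ⟨k, x, t, hk1, hkN, hxt, hqeq⟩ := SteinerAux.PN_elim hq
    rw [totalMass]
    apply integral_nonneg
    intro v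
    rw [hqeq v]
    exact SteinerAux.expNeg_nonneg _
  apply Real.sSup_le _ hsupnn
  rintro r ⟨q, hq, rfl⟩
  obtain ⟨k, y, t, hk1, hkN, hyt, hqeq⟩ := SteinerAux.PN_elim hq
  obtain ⟨m, rfl⟩ : ∃ m, n = m + 1 := ⟨n - 1, (Nat.succ_pred_eq_of_pos hn).symm⟩
  have hext : ∀ i, ∃ (z : Eucl (m+1)) (τ μ : ℝ), (inner ℝ z u : ℝ) = 0 ∧ y i = z + τ • u ∧
      ψ (z + (τ + μ) • u) ≤ ((t i : ℝ) : EReal) ∧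
      ψ (z + (μ - τ) • u) ≤ ((t i : ℝ) : EReal) :=
    fun i => SteinerAux.steiner_extract hbot hconv hlsc hfeq hRpos hgrowth hu hg (hyt i)
  choose zf τf μf hzperp hydec hplus hminus using hext
  have hmid : ∀ i, τf i = ((τf i + μf i) + (τf i - μf i))/2 := fun i => by ring
  have hkey := SteinerAux.key_ineq hu zf hzperp t τf (fun i => τf i + μf i)
    (fun i => τf i - μf i) hmid
  have hyfun : y = fun i => zf i + τf i • u := funext hydec
  have hqfun : q = fun v => expNeg (SteinerAux.pval (fun i => zf i + τf i • u) t v) := by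
    funext v
    rw [hqeq v, hyfun]
  have hplus' : ∀ i, negLog (f (zf i + (τf i + μf i) • u)) ≤ ((t i : ℝ) : EReal) :=
    fun i => by rw [hnegf]; exact hplus i
  have hminus' : ∀ i, negLog (f (zf i + (μf i - τf i) • u)) ≤ ((t i : ℝ) : EReal) :=
    fun i => by rw [hnegf]; exact hminus i
  have hq1mem := SteinerAux.PN_intro f hk1 hkN (fun i => zf i + (τf i + μf i) • u) t hplus'
  have hq2mem := SteinerAux.PN_intro f hk1 hkN (fun i => zf i + (μf i - τf i) • u) t hminus'
  -- reflection identity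
  have hcfg : (fun i => zf i + (-(τf i - μf i)) • u) = fun i => zf i + (μf i - τf i) • u := by
    funext i
    congr 1
    rw [neg_sub]
  have hreflfun : ∀ v : Eucl (m+1),
      SteinerAux.pval (fun i => zf i + (τf i - μf i) • u) t v
        = SteinerAux.pval (fun i => zf i + (μf i - τf i) • u) t
            ((Submodule.reflection ((ℝ ∙ u)ᗮ)) v) := by
    intro v
    have h1 := SteinerAux.pval_reflect hu hzperp t (fun i => τf i - μf i) v
    rw [hcfg] at h1
    exact h1
  have hM2eq : (∫⁻ v, ENNReal.ofReal (expNeg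
        (SteinerAux.pval (fun i => zf i + (τf i - μf i) • u) t v)))
      = ∫⁻ v, ENNReal.ofReal (expNeg
        (SteinerAux.pval (fun i => zf i + (μf i - τf i) • u) t v)) := by
    calc (∫⁻ v, ENNReal.ofReal (expNeg
          (SteinerAux.pval (fun i => zf i + (τf i - μf i) • u) t v)))
        = ∫⁻ v, ENNReal.ofReal (expNeg
          (SteinerAux.pval (fun i => zf i + (μf i - τf i) • u) t
            ((Submodule.reflection ((ℝ ∙ u)ᗮ)) v))) := by
          apply lintegral_congr
          intro v
          rw [hreflfun v]
    _ = ∫⁻ v, ENNReal.ofReal (expNeg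
          (SteinerAux.pval (fun i => zf i + (μf i - τf i) • u) t v)) :=
          (LinearIsometryEquiv.measurePreserving (Submodule.reflection ((ℝ ∙ u)ᗮ))).lintegral_comp
            (SteinerAux.measurable_expNeg_pval _ _).ennreal_ofReal
  set M₁ := ∫⁻ v, ENNReal.ofReal (expNeg
      (SteinerAux.pval (fun i => zf i + (τf i + μf i) • u) t v)) with hM₁
  set M₂' := ∫⁻ v, ENNReal.ofReal (expNeg
      (SteinerAux.pval (fun i => zf i + (μf i - τf i) • u) t v)) with hM₂'
  have hfin1 : M₁ < ⊤ := lt_of_le_of_lt (hmassle _ t hplus) hFin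
  have hfin2 : M₂' < ⊤ := lt_of_le_of_lt (hmassle _ t hminus) hFin
  rw [hM2eq] at hkey
  -- conclude
  have hq1mass : totalMass (fun v => expNeg
      (SteinerAux.pval (fun i => zf i + (τf i + μf i) • u) t v)) = M₁.toReal :=
    SteinerAux.totalMass_eq_toReal (SteinerAux.measurable_expNeg_pval _ _)
      (fun v => SteinerAux.expNeg_nonneg _)
  have hq2mass : totalMass (fun v => expNeg
      (SteinerAux.pval (fun i => zf i + (μf i - τf i) • u) t v)) = M₂'.toReal :=
    SteinerAux.totalMass_eq_toReal (SteinerAux.measurable_expNeg_pval _ _)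
      (fun v => SteinerAux.expNeg_nonneg _)
  have hrle : totalMass q ≤ max M₁.toReal M₂'.toReal := by
    rw [hqfun, SteinerAux.totalMass_eq_toReal (SteinerAux.measurable_expNeg_pval _ _)
      (fun v => SteinerAux.expNeg_nonneg _)]
    have h1 : (∫⁻ v, ENNReal.ofReal (expNeg
        (SteinerAux.pval (fun i => zf i + τf i • u) t v))).toReal
        ≤ (max M₁ M₂').toReal :=
      ENNReal.toReal_mono (by
        rw [max_def]
        split <;> [exact hfin2.ne; exact hfin1.ne]) hkey
    rwa [ENNReal.toReal_max hfin1.ne hfin2.ne] at h1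
  have hin1 : M₁.toReal ∈ Lf := ⟨_, hq1mem, hq1mass.symm⟩
  have hin2 : M₂'.toReal ∈ Lf := ⟨_, hq2mem, hq2mass.symm⟩
  exact le_trans hrle (max_le (le_csSup hbdd hin1) (le_csSup hbdd hin2))
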